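/- Let n ≥ 1 be an integer, and let A and B be finite abelian groups killed by n, equipped with chains of subgroups A₂ ⊆ A₁ ⊆ A and B₂ ⊆ B₁ ⊆ B. Let e : A × B → Z/nZ be a bi-additive pairing such that e(a, b) = 0 whenever (a ∈ A₁ and b ∈ B₂) or (a ∈ A₂ and b ∈ B₁). Then e induces well-defined bi-additive pairings e₀ : (A/A₁) × B₂ → Z/nZ, e₁ : (A₁/A₂) × (B₁/B₂) → Z/nZ, and e₂ : A₂ × (B/B₁) → Z/nZ. If e₀, e₁, and e₂ are all perfect, then e is perfect. -/

import Mathlib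

/-- A bi-additive pairing `e : A × B → ZMod n` between abelian groups is *perfect* if both
induced homomorphisms `A → Hom(B, ZMod n)`, `a ↦ e a`, and `B → Hom(A, ZMod n)`,
`b ↦ e (−) b`, are bijective. -/
def IsPerfectPairing {n : ℕ} {A B : Type*} [AddCommGroup A] [AddCommGroup B]
    (e : A →+ B →+ ZMod n) : Prop :=
  Function.Bijective e ∧ Function.Bijective e.flip

/-- Lift a pairing through a quotient in the second variable. -/
def pairLiftRight {n : ℕ} {A B : Type*} [AddCommGroup A] [AddCommGroup B]
    (N : AddSubgroup B) (f : A →+ B →+ ZMod n) (h : ∀ a : A, ∀ b ∈ N, f a b = 0) :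
    A →+ (B ⧸ N) →+ ZMod n where
  toFun a := QuotientAddGroup.lift N (f a) (h a)
  map_zero' := by
    ext x
    simp
  map_add' a a' := by
    ext x
    simp
    rfl

@[simp] lemma pairLiftRight_apply {n : ℕ} {A B : Type*} [AddCommGroup A] [AddCommGroup B]
    (N : AddSubgroup B) (f : A →+ B →+ ZMod n) (h : ∀ a : A, ∀ b ∈ N, f a b = 0)
    (a : A) (b : B) : pairLiftRight N f h a (QuotientAddGroup.mk b) = f a b := rfl

/-- Let `n ≥ 1` and let `A`, `B` be finite abelian groups killed by `n`, with chains of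
subgroups `A₂ ⊆ A₁ ⊆ A` and `B₂ ⊆ B₁ ⊆ B`.  Let `e : A × B → ZMod n` be a bi-additive
pairing vanishing on `A₁ × B₂` and on `A₂ × B₁`.  Then `e` induces well-defined bi-additive
pairings `e₀ : (A/A₁) × B₂ → ZMod n`, `e₁ : (A₁/A₂) × (B₁/B₂) → ZMod n`, and
`e₂ : A₂ × (B/B₁) → ZMod n`; and if `e₀`, `e₁`, `e₂` are all perfect, then `e` is
perfect. -/
theorem perfect_of_perfect_on_filtration
    (n : ℕ) (hn : 1 ≤ n) {A B : Type*} [AddCommGroup A] [AddCommGroup B]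
    [Finite A] [Finite B] (hA : ∀ a : A, n • a = 0) (hB : ∀ b : B, n • b = 0)
    (A₁ A₂ : AddSubgroup A) (B₁ B₂ : AddSubgroup B) (hA₂₁ : A₂ ≤ A₁) (hB₂₁ : B₂ ≤ B₁)
    (e : A →+ B →+ ZMod n)
    (hvan₁ : ∀ a ∈ A₁, ∀ b ∈ B₂, e a b = 0)
    (hvan₂ : ∀ a ∈ A₂, ∀ b ∈ B₁, e a b = 0) :
    ∃ (e₀ : (A ⧸ A₁) →+ B₂ →+ ZMod n)
      (e₁ : (A₁ ⧸ A₂.addSubgroupOf A₁) →+ (B₁ ⧸ B₂.addSubgroupOf B₁) →+ ZMod n)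
      (e₂ : A₂ →+ (B ⧸ B₁) →+ ZMod n),
      (∀ (a : A) (b : B₂), e₀ (QuotientAddGroup.mk a) b = e a b) ∧
      (∀ (a : A₁) (b : B₁),
        e₁ (QuotientAddGroup.mk a) (QuotientAddGroup.mk b) = e a b) ∧
      (∀ (a : A₂) (b : B), e₂ a (QuotientAddGroup.mk b) = e a b) ∧
      (IsPerfectPairing e₀ → IsPerfectPairing e₁ → IsPerfectPairing e₂ →
        IsPerfectPairing e) := by
  classical
  -- the pairing `A → (B₂ → ZMod n)`
  set g₀ : A →+ B₂ →+ ZMod n := (e.flip.comp B₂.subtype).flip with hg₀def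
  have hg₀ : ∀ a ∈ A₁, g₀ a = 0 := by
    intro a ha
    ext b
    exact hvan₁ a ha b b.2
  set e₀ : (A ⧸ A₁) →+ B₂ →+ ZMod n := QuotientAddGroup.lift A₁ g₀ hg₀ with he₀def
  have spec₀ : ∀ (a : A) (b : B₂), e₀ (QuotientAddGroup.mk a) b = e a b := fun a b => rfl
  -- the pairing `A₂ → (B/B₁ → ZMod n)`
  set e₂ : A₂ →+ (B ⧸ B₁) →+ ZMod n :=
    pairLiftRight B₁ (e.comp A₂.subtype) (fun a b hb => hvan₂ a a.2 b hb) with he₂def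
  have spec₂ : ∀ (a : A₂) (b : B), e₂ a (QuotientAddGroup.mk b) = e a b := fun a b => rfl
  -- the middle pairing
  set eRes : A₁ →+ B₁ →+ ZMod n := ((e.comp A₁.subtype).flip.comp B₁.subtype).flip
    with heResdef
  set e₁' : A₁ →+ (B₁ ⧸ B₂.addSubgroupOf B₁) →+ ZMod n :=
    pairLiftRight (B₂.addSubgroupOf B₁) eRes (fun a b hb => hvan₁ a a.2 b hb) with he₁'def
  have hg₁ : ∀ a ∈ A₂.addSubgroupOf A₁, e₁' a = 0 := by
    intro a ha
    ext x
    exact hvan₂ a ha x x.2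
  set e₁ : (A₁ ⧸ A₂.addSubgroupOf A₁) →+ (B₁ ⧸ B₂.addSubgroupOf B₁) →+ ZMod n :=
    QuotientAddGroup.lift (A₂.addSubgroupOf A₁) e₁' hg₁ with he₁def
  have spec₁ : ∀ (a : A₁) (b : B₁),
      e₁ (QuotientAddGroup.mk a) (QuotientAddGroup.mk b) = e a b := fun a b => rfl
  refine ⟨e₀, e₁, e₂, spec₀, spec₁, spec₂, ?_⟩
  rintro ⟨h₀l, h₀r⟩ ⟨h₁l, h₁r⟩ ⟨h₂l, h₂r⟩
  constructor
  · constructor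
    · -- injectivity of `a ↦ e a`
      intro a a' hzero
      rw [← sub_eq_zero]
      set c := a - a' with hc
      have hcz : e c = 0 := by rw [hc, map_sub, hzero, sub_self]
      have hcB : ∀ b : B, e c b = 0 := fun b => by rw [hcz]; rfl
      -- step 0 : c ∈ A₁
      have h1 : c ∈ A₁ := by
        have hz : e₀ (QuotientAddGroup.mk c) = 0 := by
          ext b; rw [spec₀]; exact hcB b
        have := h₀l.1 (by rw [hz, map_zero] :
          e₀ (QuotientAddGroup.mk c) = e₀ 0)
        exact (QuotientAddGroup.eq_zero_iff c).mp this
      -- step 1 : c ∈ A₂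
      have h2 : c ∈ A₂ := by
        have hz : e₁ (QuotientAddGroup.mk ⟨c, h1⟩) = 0 := by
          ext x
          simpa [spec₁] using hcB x
        have := h₁l.1 (by rw [hz, map_zero] :
          e₁ (QuotientAddGroup.mk ⟨c, h1⟩) = e₁ 0)
        have h2' : (⟨c, h1⟩ : A₁) ∈ A₂.addSubgroupOf A₁ :=
          (QuotientAddGroup.eq_zero_iff (⟨c, h1⟩ : A₁)).mp this
        exact AddSubgroup.mem_addSubgroupOf.mp h2'
      -- step 2 : c = 0
      have hz : e₂ ⟨c, h2⟩ = 0 := by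
        ext x
        simpa [spec₂] using hcB x
      have := h₂l.1 (by rw [hz, map_zero] : e₂ ⟨c, h2⟩ = e₂ 0)
      simpa using congrArg Subtype.val this
    · -- surjectivity of `a ↦ e a`
      intro φ
      obtain ⟨x₀, hx₀⟩ := h₀l.2 (φ.comp B₂.subtype)
      obtain ⟨a₀, rfl⟩ := QuotientAddGroup.mk_surjective x₀
      have ha₀ : ∀ b ∈ B₂, e a₀ b = φ b := by
        intro b hb
        have := congrArg (fun f => f ⟨b, hb⟩) hx₀
        simpa [spec₀] using this
      set ψ : B →+ ZMod n := φ - e a₀ with hψdef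
      have hψ : ∀ b ∈ B₂, ψ b = 0 := by
        intro b hb
        simp [hψdef, ha₀ b hb]
      set ψ₁ : (B₁ ⧸ B₂.addSubgroupOf B₁) →+ ZMod n :=
        QuotientAddGroup.lift (B₂.addSubgroupOf B₁) (ψ.comp B₁.subtype)
          (fun b hb => hψ b hb) with hψ₁def
      obtain ⟨y, hy⟩ := h₁l.2 ψ₁
      obtain ⟨a₁', rfl⟩ := QuotientAddGroup.mk_surjective y
      have ha₁ : ∀ b ∈ B₁, e a₁' b = ψ b := by
        intro b hb
        have := congrArg (fun f => f (QuotientAddGroup.mk ⟨b, hb⟩)) hy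
        exact this
      set χ : B →+ ZMod n := ψ - e a₁' with hχdef
      have hχ : ∀ b ∈ B₁, χ b = 0 := by
        intro b hb
        simp [hχdef, ha₁ b hb]
      set χ' : (B ⧸ B₁) →+ ZMod n := QuotientAddGroup.lift B₁ χ hχ with hχ'def
      obtain ⟨a₂, ha₂⟩ := h₂l.2 χ'
      have ha₂' : ∀ b : B, e a₂ b = χ b := by
        intro b
        have := congrArg (fun f => f (QuotientAddGroup.mk b)) ha₂
        exact this
      refine ⟨(a₀ : A) + a₁' + a₂, ?_⟩
      ext b
      have := ha₂' b
      simp only [hχdef, hψdef, AddMonoidHom.sub_apply] at this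
      simp only [map_add, AddMonoidHom.add_apply]
      linear_combination this
  · constructor
    · -- injectivity of `b ↦ e (−) b`
      intro b b' hzero
      rw [← sub_eq_zero]
      set c := b - b' with hc
      have hcz : e.flip c = 0 := by rw [hc, map_sub, hzero, sub_self]
      have hcA : ∀ a : A, e a c = 0 := fun a => by
        have := congrArg (fun f => f a) hcz; simpa using this
      have h1 : c ∈ B₁ := by
        have hz : e₂.flip (QuotientAddGroup.mk c) = 0 := by
          ext a; simpa [spec₂] using hcA a
        have := h₂r.1 (by rw [hz, map_zero] :
          e₂.flip (QuotientAddGroup.mk c) = e₂.flip 0)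
        exact (QuotientAddGroup.eq_zero_iff c).mp this
      have h2 : c ∈ B₂ := by
        have hz : e₁.flip (QuotientAddGroup.mk ⟨c, h1⟩) = 0 := by
          ext x
          simpa [spec₁] using hcA x
        have := h₁r.1 (by rw [hz, map_zero] :
          e₁.flip (QuotientAddGroup.mk ⟨c, h1⟩) = e₁.flip 0)
        have h2' : (⟨c, h1⟩ : B₁) ∈ B₂.addSubgroupOf B₁ :=
          (QuotientAddGroup.eq_zero_iff (⟨c, h1⟩ : B₁)).mp this
        exact AddSubgroup.mem_addSubgroupOf.mp h2'
      have hz : e₀.flip ⟨c, h2⟩ = 0 := by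
        ext x
        simpa [spec₀] using hcA x
      have := h₀r.1 (by rw [hz, map_zero] : e₀.flip ⟨c, h2⟩ = e₀.flip 0)
      simpa using congrArg Subtype.val this
    · -- surjectivity of `b ↦ e (−) b`
      intro φ
      obtain ⟨x₀, hx₀⟩ := h₂r.2 (φ.comp A₂.subtype)
      obtain ⟨b₀, rfl⟩ := QuotientAddGroup.mk_surjective x₀
      have hb₀ : ∀ a ∈ A₂, e a b₀ = φ a := by
        intro a ha
        have := congrArg (fun f => f ⟨a, ha⟩) hx₀
        simpa [spec₂] using this
      set ψ : A →+ ZMod n := φ - e.flip b₀ with hψdef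
      have hψ : ∀ a ∈ A₂, ψ a = 0 := by
        intro a ha
        simp [hψdef, hb₀ a ha]
      set ψ₁ : (A₁ ⧸ A₂.addSubgroupOf A₁) →+ ZMod n :=
        QuotientAddGroup.lift (A₂.addSubgroupOf A₁) (ψ.comp A₁.subtype)
          (fun a ha => hψ a ha) with hψ₁def
      obtain ⟨y, hy⟩ := h₁r.2 ψ₁
      obtain ⟨b₁', rfl⟩ := QuotientAddGroup.mk_surjective y
      have hb₁ : ∀ a ∈ A₁, e a b₁' = ψ a := by
        intro a ha
        have := congrArg (fun f => f (QuotientAddGroup.mk ⟨a, ha⟩)) hy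
        exact this
      set χ : A →+ ZMod n := ψ - e.flip b₁' with hχdef
      have hχ : ∀ a ∈ A₁, χ a = 0 := by
        intro a ha
        simp [hχdef, hb₁ a ha]
      set χ' : (A ⧸ A₁) →+ ZMod n := QuotientAddGroup.lift A₁ χ hχ with hχ'def
      obtain ⟨b₂, hb₂⟩ := h₀r.2 χ'
      have hb₂' : ∀ a : A, e a b₂ = χ a := by
        intro a
        have := congrArg (fun f => f (QuotientAddGroup.mk a)) hb₂
        exact this
      refine ⟨(b₀ : B) + b₁' + b₂, ?_⟩
      ext a
      have := hb₂' a
      simp only [hχdef, hψdef, AddMonoidHom.sub_apply] at this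
      simp only [map_add, AddMonoidHom.flip_apply, AddMonoidHom.add_apply] at this ⊢
      linear_combination this
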